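/- For every real t, |((1+η)^(1/2+it) − 1)/(1/2+it)| ≤ C · min(η, 1/(1+|t|)) for some absolute constant C, where 0 < η ≤ 1 and (1+η)^(1/2+it) = exp((1/2+it)·log(1+η)). -/

import Mathlib

lemma exp_sub_one_bound (z : ℂ) (hz : 0 ≤ z.re) :
    ‖Complex.exp z - 1‖ ≤ ‖z‖ * Real.exp z.re := by
  set M : ℝ := ‖z‖ * Real.exp z.re with hM
  have key : ∀ u ∈ Set.Icc (0:ℝ) 1,
      HasDerivWithinAt (fun u : ℝ => Complex.exp ((u:ℂ) * z))
        (Complex.exp ((u:ℂ) * z) * z) (Set.Icc 0 1) u := by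
    intro u hu
    have h1 : HasDerivAt (fun u : ℝ => (u:ℂ) * z) z u := by
      simpa using (Complex.ofRealCLM.hasDerivAt (x := u)).mul_const z
    exact ((Complex.hasDerivAt_exp ((u:ℂ)*z)).comp u h1).hasDerivWithinAt
  have bound : ∀ u ∈ Set.Icc (0:ℝ) 1,
      ‖Complex.exp ((u:ℂ) * z) * z‖ ≤ M := by
    intro u hu
    rw [norm_mul, Complex.norm_exp]
    have hre : ((u:ℂ) * z).re = u * z.re := by simp
    rw [hre, hM, mul_comm (‖z‖)]
    gcongr
    nlinarith [hu.1, hu.2, hz]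
  have := (convex_Icc (0:ℝ) 1).norm_image_sub_le_of_norm_hasDerivWithin_le
    key bound (Set.left_mem_Icc.2 zero_le_one) (Set.right_mem_Icc.2 zero_le_one)
  simpa using this

open Complex in
theorem stmt_5 :
    ∃ C : ℝ, 0 < C ∧ ∀ η t : ℝ, 0 < η → η ≤ 1 →
      ‖(((1 + η : ℝ) : ℂ) ^ ((1/2 : ℂ) + t * Complex.I) - 1) /
          ((1/2 : ℂ) + t * Complex.I)‖ ≤ C * min η (1 / (1 + |t|)) := by
  refine ⟨16, by norm_num, ?_⟩
  intro η t hη hη1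
  set L : ℝ := Real.log (1 + η) with hLdef
  set s : ℂ := (1/2 : ℂ) + t * Complex.I with hs
  have h1η : (0:ℝ) < 1 + η := by linarith
  have hne : ((1 + η : ℝ) : ℂ) ≠ 0 := by
    exact_mod_cast ne_of_gt h1η
  have hcpow : ((1 + η : ℝ) : ℂ) ^ s = Complex.exp ((L:ℂ) * s) := by
    rw [Complex.cpow_def_of_ne_zero hne, ← Complex.ofReal_log h1η.le]
  have hL0 : 0 ≤ L := Real.log_nonneg (by linarith)
  have hLη : L ≤ η := by
    have := Real.log_le_sub_one_of_pos h1η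
    linarith
  have hsre : s.re = 1/2 := by simp [hs]
  have hsim : s.im = t := by simp [hs]
  have hzre : ((L:ℂ) * s).re = L * (1/2) := by simp [hs]
  have habs_s_half : (1:ℝ)/2 ≤ ‖s‖ := by
    have := Complex.abs_re_le_norm s
    rw [hsre] at this
    exact (le_abs_self _).trans this
  have habs_s_t : |t| ≤ ‖s‖ := by
    have := Complex.abs_im_le_norm s
    rwa [hsim] at this
  have hS0 : 0 < ‖s‖ := lt_of_lt_of_le (by norm_num) habs_s_half
  have hSlb : (1 + |t|) / 4 ≤ ‖s‖ := by
    rcases le_total (|t|) 1 with h | h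
    · linarith
    · linarith
  -- bound on exp(L/2)
  have hexp3 : Real.exp (L * (1/2)) ≤ 3 := by
    have h1 : L * (1/2) ≤ 1 := by nlinarith
    calc Real.exp (L * (1/2)) ≤ Real.exp 1 := Real.exp_le_exp.2 h1
    _ ≤ 3 := by linarith [Real.exp_one_lt_d9]
  have hzabs : ‖(L:ℂ) * s‖ = L * ‖s‖ := by
    rw [norm_mul, Complex.norm_real, Real.norm_eq_abs, _root_.abs_of_nonneg hL0]
  set A : ℝ := ‖Complex.exp ((L:ℂ) * s) - 1‖ with hA
  have hA3 : A ≤ L * ‖s‖ * 3 := by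
    have := exp_sub_one_bound ((L:ℂ) * s) (by rw [hzre]; positivity)
    rw [hzabs, hzre] at this
    calc A ≤ L * ‖s‖ * Real.exp (L * (1/2)) := this
    _ ≤ L * ‖s‖ * 3 := by
        have : 0 ≤ L * ‖s‖ := by positivity
        nlinarith
  have hA4 : A ≤ 4 := by
    have h1 : ‖Complex.exp ((L:ℂ) * s)‖ ≤ 3 := by
      rw [Complex.norm_exp, hzre]; exact hexp3
    have h2 := norm_sub_le (Complex.exp ((L:ℂ) * s)) 1
    simp only [norm_one] at h2
    linarith
  rw [hcpow, norm_div]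
  have habs1 : A / ‖s‖ ≤ 16 * η := by
    rw [div_le_iff₀ hS0]
    nlinarith
  have habs2 : A / ‖s‖ ≤ 16 * (1 / (1 + |t|)) := by
    rw [div_le_iff₀ hS0]
    have ht0 : (0:ℝ) < 1 + |t| := by positivity
    rw [mul_one_div, div_mul_eq_mul_div, le_div_iff₀ ht0]
    nlinarith
  calc A / ‖s‖ ≤ min (16 * η) (16 * (1 / (1 + |t|))) := le_min habs1 habs2
  _ = 16 * min η (1 / (1 + |t|)) := by rw [mul_min_of_nonneg _ _ (by norm_num)]
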